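/- (Long regression, general decomposition.) Assume positivity and that the (K+1)×(K+1) covariance matrix of (D,A) is positive definite. Then the long-regression slope satisfies Δ_long = Σ_{a∈𝒜} ω_dce^l(a)·E[Y(1,a)−Y(0,a) | D=1, A=a] + Σ_{a∈𝒜} ω_ind^l(a)·(E[Y(0,a) | D=0, A=a] − E[Y(0,0) | D=0, A=0]) + Σ_{a∈𝒜} ω_dce^l(a)·(E[Y(0,a) | D=1, A=a] − E[Y(0,a) | D=0, A=a]). -/

import Mathlib

open MeasureTheory ProbabilityTheory BigOperators

noncomputable section

variable {Ω : Type} [MeasurableSpace Ω] {K : ℕ}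

/-- Expectation of a real-valued random variable. -/
def Exp (P : Measure Ω) (Z : Ω → ℝ) : ℝ := ∫ ω, Z ω ∂P

/-- Probability of an event, as a real number. -/
def Pr (P : Measure Ω) (s : Set Ω) : ℝ := (P s).toReal

/-- Conditional expectation given an event, defined as a ratio. -/
def CE (P : Measure Ω) (Z : Ω → ℝ) (s : Set Ω) : ℝ :=
  Exp P (fun ω => Z ω * s.indicator (fun _ => (1:ℝ)) ω) / Pr P s

/-- Covariance of two real-valued random variables. -/
def Cov (P : Measure Ω) (Z W : Ω → ℝ) : ℝ :=
  Exp P (fun ω => Z ω * W ω) - Exp P Z * Exp P W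

/-- The event {D = d, A = a}. -/
def evDA (D : Ω → ℕ) (A : Ω → Fin K → ℕ) (d : ℕ) (a : Fin K → ℕ) : Set Ω :=
  {ω | D ω = d ∧ A ω = a}

/-- The event {D = d}. -/
def evD (D : Ω → ℕ) (d : ℕ) : Set Ω := {ω | D ω = d}

/-- The event {A = a}. -/
def evA (A : Ω → Fin K → ℕ) (a : Fin K → ℕ) : Set Ω := {ω | A ω = a}

/-- π_d(a) = P(A = a | D = d). -/
def piP (P : Measure Ω) (D : Ω → ℕ) (A : Ω → Fin K → ℕ) (d : ℕ) (a : Fin K → ℕ) : ℝ :=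
  Pr P (evDA D A d a) / Pr P (evD D d)

/-- The observed outcome Y = Σ_{(d,a)} Y(d,a)·1{D=d, A=a}. -/
def Yobs (D : Ω → ℕ) (A : Ω → Fin K → ℕ) (𝒜 : Finset (Fin K → ℕ))
    (Ypot : ℕ → (Fin K → ℕ) → Ω → ℝ) : Ω → ℝ :=
  fun ω => ∑ d ∈ ({0, 1} : Finset ℕ), ∑ a ∈ 𝒜,
    Ypot d a ω * (if D ω = d ∧ A ω = a then (1:ℝ) else 0)

/-- μ(d,a) = E[Y(d,a)]. -/
def muP (P : Measure Ω) (Ypot : ℕ → (Fin K → ℕ) → Ω → ℝ) (d : ℕ) (a : Fin K → ℕ) : ℝ :=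
  Exp P (Ypot d a)

/-- The random vector (D, A) as a real-valued family indexed by Unit ⊕ Fin K. -/
def DAvec (D : Ω → ℕ) (A : Ω → Fin K → ℕ) : Unit ⊕ Fin K → Ω → ℝ :=
  Sum.elim (fun _ ω => (D ω : ℝ)) (fun j ω => (A ω j : ℝ))

/-- The (K+1)×(K+1) covariance matrix of (D, A). -/
def covDAmat (P : Measure Ω) (D : Ω → ℕ) (A : Ω → Fin K → ℕ) :
    Matrix (Unit ⊕ Fin K) (Unit ⊕ Fin K) ℝ :=
  Matrix.of fun i j => Cov P (DAvec D A i) (DAvec D A j)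

/-- The K×K covariance matrix Var(A). -/
def varAmat (P : Measure Ω) (A : Ω → Fin K → ℕ) : Matrix (Fin K) (Fin K) ℝ :=
  Matrix.of fun i j => Cov P (fun ω => (A ω i : ℝ)) (fun ω => (A ω j : ℝ))

/-- The row vector Cov(D, A). -/
def covDA (P : Measure Ω) (D : Ω → ℕ) (A : Ω → Fin K → ℕ) : Fin K → ℝ :=
  fun j => Cov P (fun ω => (D ω : ℝ)) (fun ω => (A ω j : ℝ))

/-- M = Cov(D,A) ⬝ Var(A)⁻¹. -/
def Mlong (P : Measure Ω) (D : Ω → ℕ) (A : Ω → Fin K → ℕ) : Fin K → ℝ :=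
  fun j => ∑ i, covDA P D A i * (varAmat P A)⁻¹ i j

/-- Var(D). -/
def varD (P : Measure Ω) (D : Ω → ℕ) : ℝ :=
  Cov P (fun ω => (D ω : ℝ)) (fun ω => (D ω : ℝ))

/-- denom = Var(D) − Cov(D,A)·Var(A)⁻¹·Cov(A,D). -/
def denomL (P : Measure Ω) (D : Ω → ℕ) (A : Ω → Fin K → ℕ) : ℝ :=
  varD P D - ∑ j, Mlong P D A j * covDA P D A j

/-- The long-regression weight ω_dce^l(a). -/
def wdceL (P : Measure Ω) (D : Ω → ℕ) (A : Ω → Fin K → ℕ) (a : Fin K → ℕ) : ℝ :=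
  piP P D A 1 a *
    (varD P D - Pr P (evD D 1) *
      ∑ j, Mlong P D A j * ((a j : ℝ) - Exp P (fun ω => (A ω j : ℝ)))) / denomL P D A

/-- The long-regression weight ω_ind^l(a). -/
def windL (P : Measure Ω) (D : Ω → ℕ) (A : Ω → Fin K → ℕ) (a : Fin K → ℕ) : ℝ :=
  (varD P D * (piP P D A 1 a - piP P D A 0 a) -
    Pr P (evA A a) * ∑ j, Mlong P D A j * ((a j : ℝ) - Exp P (fun ω => (A ω j : ℝ))))
  / denomL P D A

/-- The residual of the long regression of Y on (1, D, A). -/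
def residLong (D : Ω → ℕ) (A : Ω → Fin K → ℕ) (𝒜 : Finset (Fin K → ℕ))
    (Ypot : ℕ → (Fin K → ℕ) → Ω → ℝ) (Δ θ₀ : ℝ) (θ : Fin K → ℝ) : Ω → ℝ :=
  fun ω => Yobs D A 𝒜 Ypot ω - Δ * (D ω : ℝ) - θ₀ - ∑ j, θ j * (A ω j : ℝ)

/-- The random vector W = (A, A·D) as a real-valued family indexed by Fin K ⊕ Fin K. -/
def Wvec (D : Ω → ℕ) (A : Ω → Fin K → ℕ) : Fin K ⊕ Fin K → Ω → ℝ :=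
  Sum.elim (fun j ω => (A ω j : ℝ)) (fun j ω => (A ω j : ℝ) * (D ω : ℝ))

/-- The 2K×2K covariance matrix Var(W), W = (A, AD). -/
def varWmat (P : Measure Ω) (D : Ω → ℕ) (A : Ω → Fin K → ℕ) :
    Matrix (Fin K ⊕ Fin K) (Fin K ⊕ Fin K) ℝ :=
  Matrix.of fun u v => Cov P (Wvec D A u) (Wvec D A v)

/-- The row vector Cov(D, W). -/
def covDW (P : Measure Ω) (D : Ω → ℕ) (A : Ω → Fin K → ℕ) : Fin K ⊕ Fin K → ℝ :=
  fun u => Cov P (fun ω => (D ω : ℝ)) (Wvec D A u)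

/-- M = Cov(D,W) ⬝ Var(W)⁻¹ for the interaction regression. -/
def Minter (P : Measure Ω) (D : Ω → ℕ) (A : Ω → Fin K → ℕ) : Fin K ⊕ Fin K → ℝ :=
  fun v => ∑ u, covDW P D A u * (varWmat P D A)⁻¹ u v

/-- denom = Var(D) − M·Cov(W,D) for the interaction regression. -/
def denomI (P : Measure Ω) (D : Ω → ℕ) (A : Ω → Fin K → ℕ) : ℝ :=
  varD P D - ∑ v, Minter P D A v * covDW P D A v

/-- E[A_j | D = 1]. -/
def condA1 (P : Measure Ω) (D : Ω → ℕ) (A : Ω → Fin K → ℕ) (j : Fin K) : ℝ :=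
  CE P (fun ω => (A ω j : ℝ)) (evD D 1)

/-- The random vector (D, A, AD) as a real-valued family. -/
def DADvec (D : Ω → ℕ) (A : Ω → Fin K → ℕ) : Unit ⊕ (Fin K ⊕ Fin K) → Ω → ℝ :=
  Sum.elim (fun _ ω => (D ω : ℝ)) (Wvec D A)

/-- The (2K+1)×(2K+1) covariance matrix of (D, A, AD). -/
def covDADmat (P : Measure Ω) (D : Ω → ℕ) (A : Ω → Fin K → ℕ) :
    Matrix (Unit ⊕ (Fin K ⊕ Fin K)) (Unit ⊕ (Fin K ⊕ Fin K)) ℝ :=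
  Matrix.of fun i j => Cov P (DADvec D A i) (DADvec D A j)

/-- The interaction-regression weight ω_dce^i(a). -/
def wdceI (P : Measure Ω) (D : Ω → ℕ) (A : Ω → Fin K → ℕ) (a : Fin K → ℕ) : ℝ :=
  piP P D A 1 a *
    (varD P D
      - Pr P (evD D 1) *
          ∑ j, Minter P D A (Sum.inl j) * ((a j : ℝ) - Exp P (fun ω => (A ω j : ℝ)))
      - Pr P (evD D 1) *
          ∑ j, Minter P D A (Sum.inr j) * ((a j : ℝ) - Pr P (evD D 1) * condA1 P D A j))
  / denomI P D A

/-- The interaction-regression weight ω_ind^i(a). -/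
def windI (P : Measure Ω) (D : Ω → ℕ) (A : Ω → Fin K → ℕ) (a : Fin K → ℕ) : ℝ :=
  (varD P D * (piP P D A 1 a - piP P D A 0 a)
    - ∑ j, Minter P D A (Sum.inl j) * Pr P (evA A a) * ((a j : ℝ) - Exp P (fun ω => (A ω j : ℝ)))
    - Pr P (evD D 1) *
        ∑ j, Minter P D A (Sum.inr j) *
          (piP P D A 1 a * (a j : ℝ) - Pr P (evA A a) * condA1 P D A j))
  / denomI P D A

/-- The residual of the interaction regression of Y on (1, D, A, AD). -/
def residInter (D : Ω → ℕ) (A : Ω → Fin K → ℕ) (𝒜 : Finset (Fin K → ℕ))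
    (Ypot : ℕ → (Fin K → ℕ) → Ω → ℝ) (Δ θ₀ : ℝ) (θ lam : Fin K → ℝ) : Ω → ℝ :=
  fun ω => Yobs D A 𝒜 Ypot ω - Δ * (D ω : ℝ) - θ₀ - (∑ j, θ j * (A ω j : ℝ))
    - ∑ j, lam j * (A ω j : ℝ) * (D ω : ℝ)

/-- P(D = d | A = a). -/
def condDgivenA (P : Measure Ω) (D : Ω → ℕ) (A : Ω → Fin K → ℕ) (d : ℕ) (a : Fin K → ℕ) : ℝ :=
  Pr P (evDA D A d a) / Pr P (evA A a)

/-- The SFE weight ω_sfe(a). -/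
def wsfe (P : Measure Ω) (D : Ω → ℕ) (A : Ω → Fin K → ℕ) (𝒜 : Finset (Fin K → ℕ))
    (a : Fin K → ℕ) : ℝ :=
  condDgivenA P D A 1 a * condDgivenA P D A 0 a * Pr P (evA A a) /
    ∑ a' ∈ 𝒜, condDgivenA P D A 1 a' * condDgivenA P D A 0 a' * Pr P (evA A a')

/-- The residual of the SFE regression of Y on (D, {1{A=a}}). -/
def residSFE (D : Ω → ℕ) (A : Ω → Fin K → ℕ) (𝒜 : Finset (Fin K → ℕ))
    (Ypot : ℕ → (Fin K → ℕ) → Ω → ℝ) (Δ : ℝ) (θ : (Fin K → ℕ) → ℝ) : Ω → ℝ :=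
  fun ω => Yobs D A 𝒜 Ypot ω - Δ * (D ω : ℝ) -
    ∑ a ∈ 𝒜, θ a * (if A ω = a then (1:ℝ) else 0)

/-- The residual of the saturated regression of Y on ({1{A=a}}, {D·1{A=a}}). -/
def residSAT (D : Ω → ℕ) (A : Ω → Fin K → ℕ) (𝒜 : Finset (Fin K → ℕ))
    (Ypot : ℕ → (Fin K → ℕ) → Ω → ℝ) (γ Δsat : (Fin K → ℕ) → ℝ) : Ω → ℝ :=
  fun ω => Yobs D A 𝒜 Ypot ω - (∑ a ∈ 𝒜, γ a * (if A ω = a then (1:ℝ) else 0)) -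
    ∑ a ∈ 𝒜, Δsat a * (D ω : ℝ) * (if A ω = a then (1:ℝ) else 0)

set_option linter.unusedSectionVars false
set_option maxHeartbeats 1000000
section Aux
variable {P : Measure Ω} {D : Ω → ℕ} {A : Ω → Fin K → ℕ} {𝒜 : Finset (Fin K → ℕ)}
  {Ypot : ℕ → (Fin K → ℕ) → Ω → ℝ}

lemma evDA_meas (hD : Measurable D) (hA : Measurable A) (d : ℕ) (a : Fin K → ℕ) :
    MeasurableSet (evDA D A d a) :=
  (hD (measurableSet_singleton d)).inter (hA (measurableSet_singleton a))

lemma mul_indicator_one (s : Set Ω) (f : Ω → ℝ) :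
    (fun ω => f ω * s.indicator (fun _ => (1:ℝ)) ω) = s.indicator f := by
  funext ω; by_cases h : ω ∈ s <;> simp [Set.indicator_apply, h]

lemma comp_eq_sum_ind (hDbin : ∀ ω, D ω = 0 ∨ D ω = 1) (hAsupp : ∀ ω, A ω ∈ 𝒜)
    (g : ℕ → (Fin K → ℕ) → ℝ) (ω : Ω) :
    g (D ω) (A ω)
      = ∑ d ∈ ({0,1} : Finset ℕ), ∑ a ∈ 𝒜,
          g d a * (evDA D A d a).indicator (fun _ => (1:ℝ)) ω := by
  have hmem : D ω ∈ ({0,1} : Finset ℕ) := by rcases hDbin ω with h | h <;> simp [h]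
  rw [Finset.sum_eq_single (D ω)]
  · rw [Finset.sum_eq_single (A ω)]
    · simp [evDA, Set.indicator_apply]
    · intro a _ ha
      have hω : ω ∉ evDA D A (D ω) a := fun h => ha h.2.symm
      rw [Set.indicator_of_notMem hω, mul_zero]
    · intro h; exact absurd (hAsupp ω) h
  · intro d _ hd
    refine Finset.sum_eq_zero fun a _ => ?_
    have hω : ω ∉ evDA D A d a := fun h => hd h.1.symm
    rw [Set.indicator_of_notMem hω, mul_zero]
  · intro h; exact absurd hmem h

lemma integrable_comp [IsProbabilityMeasure P] (hD : Measurable D) (hA : Measurable A)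
    (hDbin : ∀ ω, D ω = 0 ∨ D ω = 1) (hAsupp : ∀ ω, A ω ∈ 𝒜)
    (g : ℕ → (Fin K → ℕ) → ℝ) : Integrable (fun ω => g (D ω) (A ω)) P := by
  rw [show (fun ω => g (D ω) (A ω)) = _ from funext (comp_eq_sum_ind hDbin hAsupp g)]
  refine integrable_finset_sum _ fun d _ => integrable_finset_sum _ fun a _ => ?_
  exact (((integrable_const (1:ℝ)).indicator (evDA_meas hD hA d a)).const_mul _)

lemma exp_comp [IsProbabilityMeasure P] (hD : Measurable D) (hA : Measurable A)
    (hDbin : ∀ ω, D ω = 0 ∨ D ω = 1) (hAsupp : ∀ ω, A ω ∈ 𝒜)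
    (g : ℕ → (Fin K → ℕ) → ℝ) :
    Exp P (fun ω => g (D ω) (A ω))
      = ∑ d ∈ ({0,1} : Finset ℕ), ∑ a ∈ 𝒜, g d a * Pr P (evDA D A d a) := by
  unfold Exp
  rw [show (fun ω => g (D ω) (A ω)) = _ from funext (comp_eq_sum_ind hDbin hAsupp g)]
  rw [integral_finset_sum _ fun d _ => integrable_finset_sum _ fun a _ =>
    (((integrable_const (1:ℝ)).indicator (evDA_meas hD hA d a)).const_mul _)]
  refine Finset.sum_congr rfl fun d _ => ?_
  rw [integral_finset_sum _ fun a _ =>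
    (((integrable_const (1:ℝ)).indicator (evDA_meas hD hA d a)).const_mul _)]
  refine Finset.sum_congr rfl fun a _ => ?_
  rw [integral_const_mul]
  congr 1
  rw [show (fun ω => (evDA D A d a).indicator (fun _ => (1:ℝ)) ω)
      = (evDA D A d a).indicator (1 : Ω → ℝ) from rfl]
  exact integral_indicator_one (evDA_meas hD hA d a)

lemma yobs_mul_comp_eq (hAsupp : ∀ ω, A ω ∈ 𝒜)
    (g : ℕ → (Fin K → ℕ) → ℝ) (ω : Ω) :
    Yobs D A 𝒜 Ypot ω * g (D ω) (A ω)
      = ∑ d ∈ ({0,1} : Finset ℕ), ∑ a ∈ 𝒜, g d a * (evDA D A d a).indicator (Ypot d a) ω := by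
  unfold Yobs
  rw [Finset.sum_mul]
  refine Finset.sum_congr rfl fun d _ => ?_
  rw [Finset.sum_mul]
  refine Finset.sum_congr rfl fun a _ => ?_
  by_cases h : D ω = d ∧ A ω = a
  · have hω : ω ∈ evDA D A d a := h
    rw [if_pos h, Set.indicator_of_mem hω, ← h.1, ← h.2]
    ring
  · have hω : ω ∉ evDA D A d a := h
    rw [if_neg h, Set.indicator_of_notMem hω]
    ring

lemma integrable_yobs_mul [IsProbabilityMeasure P] (hD : Measurable D) (hA : Measurable A)
    (hAsupp : ∀ ω, A ω ∈ 𝒜)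
    (hInt : ∀ d ∈ ({0, 1} : Finset ℕ), ∀ a ∈ 𝒜, Integrable (Ypot d a) P)
    (g : ℕ → (Fin K → ℕ) → ℝ) :
    Integrable (fun ω => Yobs D A 𝒜 Ypot ω * g (D ω) (A ω)) P := by
  rw [show (fun ω => Yobs D A 𝒜 Ypot ω * g (D ω) (A ω)) = _ from
    funext (yobs_mul_comp_eq hAsupp g)]
  refine integrable_finset_sum _ fun d hd => integrable_finset_sum _ fun a ha => ?_
  exact (((hInt d hd a ha).indicator (evDA_meas hD hA d a)).const_mul _)

lemma exp_yobs_mul [IsProbabilityMeasure P] (hD : Measurable D) (hA : Measurable A)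
    (hAsupp : ∀ ω, A ω ∈ 𝒜)
    (hInt : ∀ d ∈ ({0, 1} : Finset ℕ), ∀ a ∈ 𝒜, Integrable (Ypot d a) P)
    (g : ℕ → (Fin K → ℕ) → ℝ) :
    Exp P (fun ω => Yobs D A 𝒜 Ypot ω * g (D ω) (A ω))
      = ∑ d ∈ ({0,1} : Finset ℕ), ∑ a ∈ 𝒜,
          g d a * Exp P ((evDA D A d a).indicator (Ypot d a)) := by
  unfold Exp
  rw [show (fun ω => Yobs D A 𝒜 Ypot ω * g (D ω) (A ω)) = _ from
    funext (yobs_mul_comp_eq hAsupp g)]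
  rw [integral_finset_sum _ fun d hd => integrable_finset_sum _ fun a ha =>
    (((hInt d hd a ha).indicator (evDA_meas hD hA d a)).const_mul _)]
  refine Finset.sum_congr rfl fun d hd => ?_
  rw [integral_finset_sum _ fun a ha =>
    (((hInt d hd a ha).indicator (evDA_meas hD hA d a)).const_mul _)]
  exact Finset.sum_congr rfl fun a ha => integral_const_mul _ _

end Aux
section Aux2
variable {P : Measure Ω} {D : Ω → ℕ} {A : Ω → Fin K → ℕ} {𝒜 : Finset (Fin K → ℕ)}
  {Ypot : ℕ → (Fin K → ℕ) → Ω → ℝ}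

lemma orth_expand [IsProbabilityMeasure P] (hD : Measurable D) (hA : Measurable A)
    (hDbin : ∀ ω, D ω = 0 ∨ D ω = 1) (hAsupp : ∀ ω, A ω ∈ 𝒜)
    (hInt : ∀ d ∈ ({0, 1} : Finset ℕ), ∀ a ∈ 𝒜, Integrable (Ypot d a) P)
    (g h' : ℕ → (Fin K → ℕ) → ℝ) (f : Ω → ℝ)
    (hf : ∀ ω, f ω = Yobs D A 𝒜 Ypot ω * g (D ω) (A ω) - h' (D ω) (A ω))
    (h0 : Exp P f = 0) :
    (∑ d ∈ ({0,1} : Finset ℕ), ∑ a ∈ 𝒜, g d a * Exp P ((evDA D A d a).indicator (Ypot d a)))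
      = ∑ d ∈ ({0,1} : Finset ℕ), ∑ a ∈ 𝒜, h' d a * Pr P (evDA D A d a) := by
  have hsplit : Exp P f
      = Exp P (fun ω => Yobs D A 𝒜 Ypot ω * g (D ω) (A ω))
        - Exp P (fun ω => h' (D ω) (A ω)) := by
    rw [show f = (fun ω => Yobs D A 𝒜 Ypot ω * g (D ω) (A ω) - h' (D ω) (A ω)) from funext hf]
    exact integral_sub (integrable_yobs_mul hD hA hAsupp hInt g)
      (integrable_comp hD hA hDbin hAsupp h')
  have h2 := sub_eq_zero.mp (hsplit.symm.trans h0)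
  exact (exp_yobs_mul hD hA hAsupp hInt g).symm.trans
    (h2.trans (exp_comp hD hA hDbin hAsupp h'))

end Aux2

lemma sum_weighted_swap {F : Type*} {K : ℕ} (𝒜 : Finset F) (av : F → Fin K → ℝ)
    (θ : Fin K → ℝ) (w : F → ℝ) :
    ∑ a ∈ 𝒜, (∑ j, θ j * av a j) * w a = ∑ j, θ j * ∑ a ∈ 𝒜, av a j * w a := by
  simp_rw [Finset.sum_mul, Finset.mul_sum, mul_assoc]
  rw [Finset.sum_comm]

lemma final_algebra {F : Type*} (𝒜 : Finset F) (a0 : F)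
    (q0 q1 y0 y1 S : F → ℝ) (p : ℝ) (hp : 0 < p) (hp1 : p < 1)
    (hq1 : ∑ a ∈ 𝒜, q1 a = p) (hq0 : ∑ a ∈ 𝒜, q0 a = 1 - p)
    (hS : ∑ a ∈ 𝒜, (q0 a + q1 a) * S a = 0) :
    ∑ a ∈ 𝒜, (q1 a / p * ((p - p^2) - p * S a)) * (y1 a - y0 a)
      + ∑ a ∈ 𝒜, ((p - p^2) * (q1 a / p - q0 a / (1 - p)) - (q0 a + q1 a) * S a) * (y0 a - y0 a0)
      = ∑ a ∈ 𝒜, (q1 a * (1 - p - S a) * y1 a + q0 a * (-p - S a) * y0 a) := by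
  have hp0 : p ≠ 0 := hp.ne'
  have h1p : (1:ℝ) - p ≠ 0 := by intro h; nlinarith
  have hC : ∑ a ∈ 𝒜, ((p - p^2) * (q1 a / p - q0 a / (1 - p)) - (q0 a + q1 a) * S a) = 0 := by
    rw [Finset.sum_sub_distrib, hS, sub_zero, ← Finset.mul_sum, Finset.sum_sub_distrib,
      ← Finset.sum_div, ← Finset.sum_div, hq1, hq0]
    field_simp
    ring
  have hsplit : ∑ a ∈ 𝒜, ((p - p^2) * (q1 a / p - q0 a / (1 - p)) - (q0 a + q1 a) * S a) * (y0 a - y0 a0)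
      = ∑ a ∈ 𝒜, ((p - p^2) * (q1 a / p - q0 a / (1 - p)) - (q0 a + q1 a) * S a) * y0 a
        - (∑ a ∈ 𝒜, ((p - p^2) * (q1 a / p - q0 a / (1 - p)) - (q0 a + q1 a) * S a)) * y0 a0 := by
    rw [Finset.sum_mul, ← Finset.sum_sub_distrib]
    exact Finset.sum_congr rfl fun a _ => by ring
  rw [hsplit, hC, zero_mul, sub_zero, ← Finset.sum_add_distrib]
  refine Finset.sum_congr rfl fun a _ => ?_
  field_simp
  ring

lemma NE_algebra {F : Type*} {K : ℕ} (𝒜 : Finset F) (av : F → Fin K → ℝ)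
    (q0 q1 m0 m1 : F → ℝ) (α M θ : Fin K → ℝ) (Δ θ₀ p : ℝ)
    (hp : ∑ a ∈ 𝒜, q1 a = p)
    (htot : ∑ a ∈ 𝒜, q0 a + ∑ a ∈ 𝒜, q1 a = 1)
    (hα : ∀ j, ∑ a ∈ 𝒜, av a j * q0 a + ∑ a ∈ 𝒜, av a j * q1 a = α j)
    (hM : ∀ i, ∑ j, M j * ((∑ a ∈ 𝒜, av a i * av a j * q0 a + ∑ a ∈ 𝒜, av a i * av a j * q1 a)
            - α i * α j) = ∑ a ∈ 𝒜, av a i * q1 a - p * α i)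
    (hE1 : ∑ a ∈ 𝒜, m0 a + ∑ a ∈ 𝒜, m1 a
      = ∑ a ∈ 𝒜, (θ₀ + ∑ j, θ j * av a j) * q0 a
        + ∑ a ∈ 𝒜, (Δ + θ₀ + ∑ j, θ j * av a j) * q1 a)
    (hE2 : ∑ a ∈ 𝒜, m1 a = ∑ a ∈ 𝒜, (Δ + θ₀ + ∑ j, θ j * av a j) * q1 a)
    (hE3 : ∀ i, ∑ a ∈ 𝒜, av a i * m0 a + ∑ a ∈ 𝒜, av a i * m1 a
      = ∑ a ∈ 𝒜, av a i * ((θ₀ + ∑ j, θ j * av a j) * q0 a)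
        + ∑ a ∈ 𝒜, av a i * ((Δ + θ₀ + ∑ j, θ j * av a j) * q1 a)) :
    Δ * ((p - p^2) - ∑ j, M j * (∑ a ∈ 𝒜, av a j * q1 a - p * α j))
      = ∑ a ∈ 𝒜, m1 a * (1 - p - ∑ j, M j * (av a j - α j))
        + ∑ a ∈ 𝒜, m0 a * (-p - ∑ j, M j * (av a j - α j)) := by
  have hswapm : ∀ m : F → ℝ, ∑ a ∈ 𝒜, m a * (∑ j, M j * (av a j - α j))
      = ∑ j, M j * (∑ a ∈ 𝒜, av a j * m a - α j * ∑ a ∈ 𝒜, m a) := by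
    intro m
    calc ∑ a ∈ 𝒜, m a * (∑ j, M j * (av a j - α j))
        = ∑ a ∈ 𝒜, ∑ j, (M j * (av a j * m a) - M j * (α j * m a)) := by
          refine Finset.sum_congr rfl fun a _ => ?_
          rw [Finset.mul_sum]
          exact Finset.sum_congr rfl fun j _ => by ring
      _ = ∑ j, ∑ a ∈ 𝒜, (M j * (av a j * m a) - M j * (α j * m a)) := Finset.sum_comm
      _ = ∑ j, M j * (∑ a ∈ 𝒜, av a j * m a - α j * ∑ a ∈ 𝒜, m a) := by
          refine Finset.sum_congr rfl fun j _ => ?_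
          rw [Finset.sum_sub_distrib]
          simp only [mul_sub, Finset.mul_sum]
  have hRHS : ∑ a ∈ 𝒜, m1 a * (1 - p - ∑ j, M j * (av a j - α j))
        + ∑ a ∈ 𝒜, m0 a * (-p - ∑ j, M j * (av a j - α j))
      = (∑ a ∈ 𝒜, m1 a) - p * ((∑ a ∈ 𝒜, m0 a) + ∑ a ∈ 𝒜, m1 a)
        - ∑ j, M j * (((∑ a ∈ 𝒜, av a j * m0 a) + ∑ a ∈ 𝒜, av a j * m1 a)
            - α j * ((∑ a ∈ 𝒜, m0 a) + ∑ a ∈ 𝒜, m1 a)) := by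
    have e1 : ∀ m : F → ℝ, ∀ c : ℝ, ∑ a ∈ 𝒜, m a * (c - ∑ j, M j * (av a j - α j))
        = c * (∑ a ∈ 𝒜, m a) - ∑ a ∈ 𝒜, m a * (∑ j, M j * (av a j - α j)) := by
      intro m c
      rw [Finset.mul_sum, ← Finset.sum_sub_distrib]
      exact Finset.sum_congr rfl fun a _ => by ring
    rw [e1 m1 (1 - p), e1 m0 (-p), hswapm, hswapm]
    have expand : ∑ j, M j * (∑ a ∈ 𝒜, av a j * m1 a - α j * ∑ a ∈ 𝒜, m1 a)
          + ∑ j, M j * (∑ a ∈ 𝒜, av a j * m0 a - α j * ∑ a ∈ 𝒜, m0 a)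
        = ∑ j, M j * (((∑ a ∈ 𝒜, av a j * m0 a) + ∑ a ∈ 𝒜, av a j * m1 a)
            - α j * ((∑ a ∈ 𝒜, m0 a) + ∑ a ∈ 𝒜, m1 a)) := by
      rw [← Finset.sum_add_distrib]
      exact Finset.sum_congr rfl fun j _ => by ring
    rw [← expand]
    ring
  rw [hRHS, hE1, hE2]
  simp_rw [hE3]
  -- expand all h-sums into scalars
  have hx0 : ∑ a ∈ 𝒜, (θ₀ + ∑ j, θ j * av a j) * q0 a
      = θ₀ * (∑ a ∈ 𝒜, q0 a) + ∑ j, θ j * ∑ a ∈ 𝒜, av a j * q0 a := by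
    rw [← sum_weighted_swap 𝒜 av θ q0, Finset.mul_sum, ← Finset.sum_add_distrib]
    exact Finset.sum_congr rfl fun a _ => by ring
  have hx1 : ∑ a ∈ 𝒜, (Δ + θ₀ + ∑ j, θ j * av a j) * q1 a
      = Δ * p + θ₀ * (∑ a ∈ 𝒜, q1 a) + ∑ j, θ j * ∑ a ∈ 𝒜, av a j * q1 a := by
    rw [← sum_weighted_swap 𝒜 av θ q1, ← hp, Finset.mul_sum, Finset.mul_sum,
      ← Finset.sum_add_distrib, ← Finset.sum_add_distrib]
    exact Finset.sum_congr rfl fun a _ => by ring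
  have hv0 : ∀ i, ∑ a ∈ 𝒜, av a i * ((θ₀ + ∑ j, θ j * av a j) * q0 a)
      = θ₀ * (∑ a ∈ 𝒜, av a i * q0 a) + ∑ j, θ j * ∑ a ∈ 𝒜, av a i * av a j * q0 a := by
    intro i
    have swap2 : ∑ a ∈ 𝒜, (∑ j, θ j * av a j) * (av a i * q0 a)
        = ∑ j, θ j * ∑ a ∈ 𝒜, av a i * av a j * q0 a := by
      rw [sum_weighted_swap 𝒜 av θ (fun a => av a i * q0 a)]
      exact Finset.sum_congr rfl fun j _ => by
        rw [mul_eq_mul_left_iff]; left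
        exact Finset.sum_congr rfl fun a _ => by ring
    rw [← swap2, Finset.mul_sum, ← Finset.sum_add_distrib]
    exact Finset.sum_congr rfl fun a _ => by ring
  have hv1 : ∀ i, ∑ a ∈ 𝒜, av a i * ((Δ + θ₀ + ∑ j, θ j * av a j) * q1 a)
      = (Δ + θ₀) * (∑ a ∈ 𝒜, av a i * q1 a) + ∑ j, θ j * ∑ a ∈ 𝒜, av a i * av a j * q1 a := by
    intro i
    have swap2 : ∑ a ∈ 𝒜, (∑ j, θ j * av a j) * (av a i * q1 a)
        = ∑ j, θ j * ∑ a ∈ 𝒜, av a i * av a j * q1 a := by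
      rw [sum_weighted_swap 𝒜 av θ (fun a => av a i * q1 a)]
      exact Finset.sum_congr rfl fun j _ => by
        rw [mul_eq_mul_left_iff]; left
        exact Finset.sum_congr rfl fun a _ => by ring
    rw [← swap2, Finset.mul_sum, ← Finset.sum_add_distrib]
    exact Finset.sum_congr rfl fun a _ => by ring
  simp_rw [hx0, hx1, hv0, hv1, hp]
  set T0 := ∑ a ∈ 𝒜, q0 a with hT0
  have hT : T0 = 1 - p := by
    rw [hp] at htot; linarith
  have s1 : ∑ j, M j * (∑ a ∈ 𝒜, av a j * q1 a - p * α j)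
      = (∑ j, M j * ∑ a ∈ 𝒜, av a j * q1 a) - p * ∑ j, M j * α j := by
    calc ∑ j, M j * (∑ a ∈ 𝒜, av a j * q1 a - p * α j)
        = ∑ j, (M j * ∑ a ∈ 𝒜, av a j * q1 a - p * (M j * α j)) :=
          Finset.sum_congr rfl fun j _ => by ring
      _ = _ := by rw [Finset.sum_sub_distrib, ← Finset.mul_sum]
  have s2 : ∑ x : Fin K, M x *
        (θ₀ * ∑ a ∈ 𝒜, av a x * q0 a + ∑ j, θ j * ∑ a ∈ 𝒜, av a x * av a j * q0 a +
            ((Δ + θ₀) * ∑ a ∈ 𝒜, av a x * q1 a + ∑ j, θ j * ∑ a ∈ 𝒜, av a x * av a j * q1 a) -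
          α x * (θ₀ * T0 + ∑ j, θ j * ∑ a ∈ 𝒜, av a j * q0 a +
            (Δ * p + θ₀ * p + ∑ j, θ j * ∑ a ∈ 𝒜, av a j * q1 a)))
      = θ₀ * (∑ j, M j * ∑ a ∈ 𝒜, av a j * q0 a)
        + (Δ + θ₀) * (∑ j, M j * ∑ a ∈ 𝒜, av a j * q1 a)
        + ((∑ x : Fin K, M x * ∑ j, θ j * ∑ a ∈ 𝒜, av a x * av a j * q0 a)
            + ∑ x : Fin K, M x * ∑ j, θ j * ∑ a ∈ 𝒜, av a x * av a j * q1 a)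
        - (θ₀ * T0 + ∑ j, θ j * ∑ a ∈ 𝒜, av a j * q0 a +
            (Δ * p + θ₀ * p + ∑ j, θ j * ∑ a ∈ 𝒜, av a j * q1 a)) * ∑ j, M j * α j := by
    calc ∑ x : Fin K, M x * _
        = ∑ x : Fin K, (θ₀ * (M x * ∑ a ∈ 𝒜, av a x * q0 a)
            + (Δ + θ₀) * (M x * ∑ a ∈ 𝒜, av a x * q1 a)
            + ((M x * ∑ j, θ j * ∑ a ∈ 𝒜, av a x * av a j * q0 a)
                + M x * ∑ j, θ j * ∑ a ∈ 𝒜, av a x * av a j * q1 a)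
            - (θ₀ * T0 + ∑ j, θ j * ∑ a ∈ 𝒜, av a j * q0 a +
                (Δ * p + θ₀ * p + ∑ j, θ j * ∑ a ∈ 𝒜, av a j * q1 a)) * (M x * α x)) :=
          Finset.sum_congr rfl fun x _ => by ring
      _ = _ := by
          simp only [Finset.sum_add_distrib, Finset.sum_sub_distrib, ← Finset.mul_sum]
  have swap' : ∀ w0 : F → ℝ, ∑ x : Fin K, M x * ∑ j, θ j * ∑ a ∈ 𝒜, av a x * av a j * w0 a
      = ∑ i, θ i * ∑ j, M j * ∑ a ∈ 𝒜, av a i * av a j * w0 a := by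
    intro w0
    calc ∑ x : Fin K, M x * ∑ j, θ j * ∑ a ∈ 𝒜, av a x * av a j * w0 a
        = ∑ x : Fin K, ∑ j, M x * (θ j * ∑ a ∈ 𝒜, av a x * av a j * w0 a) :=
          Finset.sum_congr rfl fun x _ => Finset.mul_sum _ _ _
      _ = ∑ j, ∑ x : Fin K, M x * (θ j * ∑ a ∈ 𝒜, av a x * av a j * w0 a) := Finset.sum_comm
      _ = ∑ i, θ i * ∑ j, M j * ∑ a ∈ 𝒜, av a i * av a j * w0 a := by
          refine Finset.sum_congr rfl fun i _ => ?_
          rw [Finset.mul_sum]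
          refine Finset.sum_congr rfl fun j _ => ?_
          rw [show (∑ a ∈ 𝒜, av a j * av a i * w0 a) = ∑ a ∈ 𝒜, av a i * av a j * w0 a from
            Finset.sum_congr rfl fun a _ => by ring]
          ring
  have hMsplit : ∀ i, (∑ j, M j * ∑ a ∈ 𝒜, av a i * av a j * q0 a)
        + (∑ j, M j * ∑ a ∈ 𝒜, av a i * av a j * q1 a)
        - α i * ∑ j, M j * α j
      = ∑ a ∈ 𝒜, av a i * q1 a - p * α i := by
    intro i
    rw [← hM i]
    calc (∑ j, M j * ∑ a ∈ 𝒜, av a i * av a j * q0 a)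
          + (∑ j, M j * ∑ a ∈ 𝒜, av a i * av a j * q1 a)
          - α i * ∑ j, M j * α j
        = ∑ j, (M j * ∑ a ∈ 𝒜, av a i * av a j * q0 a
            + M j * ∑ a ∈ 𝒜, av a i * av a j * q1 a - α i * (M j * α j)) := by
          rw [Finset.sum_sub_distrib, Finset.sum_add_distrib, ← Finset.mul_sum]
      _ = _ := Finset.sum_congr rfl fun j _ => by ring
  have s4 : (∑ i, θ i * ∑ j, M j * ∑ a ∈ 𝒜, av a i * av a j * q0 a)
        + ∑ i, θ i * ∑ j, M j * ∑ a ∈ 𝒜, av a i * av a j * q1 a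
      = (∑ i, θ i * ∑ a ∈ 𝒜, av a i * q1 a) - p * (∑ i, θ i * α i)
        + (∑ i, θ i * α i) * ∑ j, M j * α j := by
    rw [← Finset.sum_add_distrib]
    calc ∑ i, (θ i * ∑ j, M j * ∑ a ∈ 𝒜, av a i * av a j * q0 a
            + θ i * ∑ j, M j * ∑ a ∈ 𝒜, av a i * av a j * q1 a)
        = ∑ i, (θ i * ∑ a ∈ 𝒜, av a i * q1 a - p * (θ i * α i)
            + (θ i * α i) * ∑ j, M j * α j) := by
          refine Finset.sum_congr rfl fun i _ => ?_
          rw [show θ i * ∑ j, M j * ∑ a ∈ 𝒜, av a i * av a j * q0 a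
              + θ i * ∑ j, M j * ∑ a ∈ 𝒜, av a i * av a j * q1 a
              = θ i * ((∑ j, M j * ∑ a ∈ 𝒜, av a i * av a j * q0 a)
                  + (∑ j, M j * ∑ a ∈ 𝒜, av a i * av a j * q1 a)
                  - α i * ∑ j, M j * α j) + (θ i * α i) * ∑ j, M j * α j from by ring,
            hMsplit i]
          ring
      _ = _ := by
          rw [Finset.sum_add_distrib, Finset.sum_sub_distrib, ← Finset.mul_sum,
            Finset.sum_mul]
  have s6 : ∑ j, θ j * ∑ a ∈ 𝒜, av a j * q0 a
      = (∑ j, θ j * α j) - ∑ j, θ j * ∑ a ∈ 𝒜, av a j * q1 a := by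
    rw [← Finset.sum_sub_distrib]
    refine Finset.sum_congr rfl fun j _ => by rw [← hα j]; ring
  have s7 : ∑ j, M j * ∑ a ∈ 𝒜, av a j * q0 a
      = (∑ j, M j * α j) - ∑ j, M j * ∑ a ∈ 𝒜, av a j * q1 a := by
    rw [← Finset.sum_sub_distrib]
    refine Finset.sum_congr rfl fun j _ => by rw [← hα j]; ring
  rw [s1, s2, swap' q0, swap' q1, s4, s6, s7, hT]
  ring
section MatrixAux
open Matrix
variable {P : Measure Ω} {D : Ω → ℕ} {A : Ω → Fin K → ℕ}

lemma Cov_comm (P : Measure Ω) (Z W : Ω → ℝ) : Cov P Z W = Cov P W Z := by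
  unfold Cov
  rw [mul_comm (Exp P Z), show (fun ω => Z ω * W ω) = (fun ω => W ω * Z ω) from
    funext fun ω => mul_comm _ _]

lemma varA_posdef (hPD : (covDAmat P D A).PosDef) : (varAmat P A).PosDef := by
  refine Matrix.PosDef.of_dotProduct_mulVec_pos ?_ ?_
  · show (varAmat P A)ᴴ = varAmat P A
    ext i j
    simp only [Matrix.conjTranspose_apply, varAmat, Matrix.of_apply, star_trivial]
    exact Cov_comm P _ _
  · intro x hx
    have hx' : (Sum.elim 0 x : Unit ⊕ Fin K → ℝ) ≠ 0 := fun h => hx (by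
      funext j; exact congrFun h (Sum.inr j))
    have h2 := hPD.dotProduct_mulVec_pos hx'
    have heq : star (Sum.elim 0 x) ⬝ᵥ (covDAmat P D A) *ᵥ (Sum.elim 0 x)
        = star x ⬝ᵥ (varAmat P A) *ᵥ x := by
      simp [dotProduct, Matrix.mulVec, Fintype.sum_sum_type, covDAmat, varAmat,
        DAvec, Matrix.of_apply, star_trivial]
    rwa [heq] at h2

lemma M_varA (hPD : (covDAmat P D A).PosDef) (i : Fin K) :
    ∑ j, Mlong P D A j * varAmat P A j i = covDA P D A i := by
  have hdet : IsUnit (varAmat P A).det := (varA_posdef hPD).det_pos.ne'.isUnit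
  have hinv : (varAmat P A)⁻¹ * (varAmat P A) = 1 := Matrix.nonsing_inv_mul _ hdet
  calc ∑ j, Mlong P D A j * varAmat P A j i
      = ∑ j, ∑ t, covDA P D A t * (varAmat P A)⁻¹ t j * varAmat P A j i := by
        refine Finset.sum_congr rfl fun j _ => ?_
        rw [Mlong, Finset.sum_mul]
    _ = ∑ t, ∑ j, covDA P D A t * (varAmat P A)⁻¹ t j * varAmat P A j i := Finset.sum_comm
    _ = ∑ t, covDA P D A t * ((varAmat P A)⁻¹ * varAmat P A) t i := by
        refine Finset.sum_congr rfl fun t _ => ?_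
        rw [Matrix.mul_apply, Finset.mul_sum]
        exact Finset.sum_congr rfl fun j _ => by ring
    _ = covDA P D A i := by
        rw [hinv]
        simp [Matrix.one_apply]

lemma M_varA' (hPD : (covDAmat P D A).PosDef) (i : Fin K) :
    ∑ j, Mlong P D A j * varAmat P A i j = covDA P D A i := by
  rw [← M_varA hPD i]
  refine Finset.sum_congr rfl fun j _ => ?_
  congr 1
  simp only [varAmat, Matrix.of_apply]
  exact Cov_comm P _ _

lemma denomL_pos (hPD : (covDAmat P D A).PosDef) : 0 < denomL P D A := by
  have hx : (Sum.elim (fun _ => (1:ℝ)) (fun j => -(Mlong P D A j)) : Unit ⊕ Fin K → ℝ) ≠ 0 :=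
    fun h => by simpa using congrFun h (Sum.inl ())
  have h2 := hPD.dotProduct_mulVec_pos hx
  have heq : star (Sum.elim (fun _ => (1:ℝ)) (fun j => -(Mlong P D A j)))
      ⬝ᵥ (covDAmat P D A) *ᵥ (Sum.elim (fun _ => (1:ℝ)) (fun j => -(Mlong P D A j)))
      = denomL P D A := by
    have expand : star (Sum.elim (fun _ => (1:ℝ)) (fun j => -(Mlong P D A j)))
        ⬝ᵥ (covDAmat P D A) *ᵥ (Sum.elim (fun _ => (1:ℝ)) (fun j => -(Mlong P D A j)))
        = varD P D - ∑ j, Mlong P D A j * covDA P D A j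
          - (∑ i, Mlong P D A i * Cov P (fun ω => ((A ω i : ℕ) : ℝ)) (fun ω => ((D ω : ℕ) : ℝ))
            - ∑ i, Mlong P D A i * ∑ j, Mlong P D A j * varAmat P A i j) := by
      simp only [dotProduct, Matrix.mulVec, Fintype.sum_sum_type, covDAmat,
        varAmat, DAvec, Matrix.of_apply, star_trivial, Finset.univ_unique,
        Finset.sum_singleton, Sum.elim_inl, Sum.elim_inr, varD, covDA, Pi.star_apply]
      have e1 : (∑ x, (Cov P (fun ω => ((D ω : ℕ) : ℝ)) fun ω => ((A ω x : ℕ) : ℝ))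
            * -Mlong P D A x)
          = -∑ x, Mlong P D A x * (Cov P (fun ω => ((D ω : ℕ) : ℝ)) fun ω => ((A ω x : ℕ) : ℝ)) := by
        rw [← Finset.sum_neg_distrib]
        exact Finset.sum_congr rfl fun x _ => by ring
      have e2 : ∀ x, (∑ y, (Cov P (fun ω => ((A ω x : ℕ) : ℝ)) fun ω => ((A ω y : ℕ) : ℝ))
            * -Mlong P D A y)
          = -∑ y, Mlong P D A y * (Cov P (fun ω => ((A ω x : ℕ) : ℝ)) fun ω => ((A ω y : ℕ) : ℝ)) := by
        intro x
        rw [← Finset.sum_neg_distrib]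
        exact Finset.sum_congr rfl fun y _ => by ring
      rw [e1]
      simp only [e2]
      have e3 : ∀ x, -Mlong P D A x *
            ((Cov P (fun ω => ((A ω x : ℕ) : ℝ)) fun ω => ((D ω : ℕ) : ℝ)) * 1 +
              -∑ y, Mlong P D A y * (Cov P (fun ω => ((A ω x : ℕ) : ℝ)) fun ω => ((A ω y : ℕ) : ℝ)))
          = -(Mlong P D A x * (Cov P (fun ω => ((A ω x : ℕ) : ℝ)) fun ω => ((D ω : ℕ) : ℝ)))
            + Mlong P D A x * ∑ y, Mlong P D A y * (Cov P (fun ω => ((A ω x : ℕ) : ℝ)) fun ω => ((A ω y : ℕ) : ℝ)) := by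
        intro x; ring
      simp only [e3]
      rw [Finset.sum_add_distrib, Finset.sum_neg_distrib]
      ring
    rw [expand]
    have h3 : ∀ i, Cov P (fun ω => ((A ω i : ℕ) : ℝ)) (fun ω => ((D ω : ℕ) : ℝ))
        = covDA P D A i := fun i => Cov_comm P _ _
    simp only [h3, M_varA' hPD]
    simp [denomL]
  rwa [heq] at h2

end MatrixAux
/-- Long regression, general decomposition (Theorem B.2 / thm:long_pre). -/
theorem long_regression_decomposition
    (P : Measure Ω) [IsProbabilityMeasure P]
    (D : Ω → ℕ) (A : Ω → Fin K → ℕ) (𝒜 : Finset (Fin K → ℕ))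
    (Ypot : ℕ → (Fin K → ℕ) → Ω → ℝ)
    (hD : Measurable D) (hA : Measurable A)
    (hDbin : ∀ ω, D ω = 0 ∨ D ω = 1)
    (hAsupp : ∀ ω, A ω ∈ 𝒜) (h𝒜0 : (0 : Fin K → ℕ) ∈ 𝒜)
    (hInt : ∀ d ∈ ({0, 1} : Finset ℕ), ∀ a ∈ 𝒜, Integrable (Ypot d a) P)
    (hpos : ∀ d ∈ ({0, 1} : Finset ℕ), ∀ a ∈ 𝒜, 0 < Pr P (evDA D A d a))
    (hPD : (covDAmat P D A).PosDef)
    (Δlong θ₀ : ℝ) (θ : Fin K → ℝ)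
    (hO1 : Exp P (residLong D A 𝒜 Ypot Δlong θ₀ θ) = 0)
    (hO2 : Exp P (fun ω => residLong D A 𝒜 Ypot Δlong θ₀ θ ω * (D ω : ℝ)) = 0)
    (hO3 : ∀ j : Fin K, Exp P (fun ω => residLong D A 𝒜 Ypot Δlong θ₀ θ ω * (A ω j : ℝ)) = 0)
    :
    Δlong
      = (∑ a ∈ 𝒜, wdceL P D A a *
            CE P (fun ω => Ypot 1 a ω - Ypot 0 a ω) (evDA D A 1 a))
        + (∑ a ∈ 𝒜, windL P D A a *
            (CE P (Ypot 0 a) (evDA D A 0 a) - CE P (Ypot 0 0) (evDA D A 0 0)))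
        + (∑ a ∈ 𝒜, wdceL P D A a *
            (CE P (Ypot 0 a) (evDA D A 1 a) - CE P (Ypot 0 a) (evDA D A 0 a))) := by
  classical
  have h01 : (0:ℕ) ≠ 1 := by norm_num
  have hone : (1:ℕ) ∈ ({0,1} : Finset ℕ) := by simp
  have hzero : (0:ℕ) ∈ ({0,1} : Finset ℕ) := by simp
  have hq1pos : ∀ a ∈ 𝒜, 0 < Pr P (evDA D A 1 a) := fun a ha => hpos 1 hone a ha
  have hq0pos : ∀ a ∈ 𝒜, 0 < Pr P (evDA D A 0 a) := fun a ha => hpos 0 hzero a ha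
  have h𝒜ne : 𝒜.Nonempty := ⟨0, h𝒜0⟩
  have hppos : 0 < ∑ a ∈ 𝒜, Pr P (evDA D A 1 a) := Finset.sum_pos hq1pos h𝒜ne
  have h0pos : 0 < ∑ a ∈ 𝒜, Pr P (evDA D A 0 a) := Finset.sum_pos hq0pos h𝒜ne
  have EC : ∀ g : ℕ → (Fin K → ℕ) → ℝ, Exp P (fun ω => g (D ω) (A ω))
      = (∑ a ∈ 𝒜, g 0 a * Pr P (evDA D A 0 a)) + ∑ a ∈ 𝒜, g 1 a * Pr P (evDA D A 1 a) := by
    intro g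
    rw [exp_comp hD hA hDbin hAsupp g, Finset.sum_pair h01]
  have EY : ∀ g : ℕ → (Fin K → ℕ) → ℝ, Exp P (fun ω => Yobs D A 𝒜 Ypot ω * g (D ω) (A ω))
      = (∑ a ∈ 𝒜, g 0 a * Exp P ((evDA D A 0 a).indicator (Ypot 0 a)))
        + ∑ a ∈ 𝒜, g 1 a * Exp P ((evDA D A 1 a).indicator (Ypot 1 a)) := by
    intro g
    rw [exp_yobs_mul hD hA hAsupp hInt g, Finset.sum_pair h01]
  have htot : (∑ a ∈ 𝒜, Pr P (evDA D A 0 a)) + ∑ a ∈ 𝒜, Pr P (evDA D A 1 a) = 1 := by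
    have h := EC (fun _ _ => (1:ℝ))
    simp only [one_mul] at h
    rw [show Exp P (fun _ : Ω => (1:ℝ)) = 1 from by simp [Exp]] at h
    linarith
  have hplt1 : (∑ a ∈ 𝒜, Pr P (evDA D A 1 a)) < 1 := by linarith
  have hq0sum : (∑ a ∈ 𝒜, Pr P (evDA D A 0 a)) = 1 - ∑ a ∈ 𝒜, Pr P (evDA D A 1 a) := by
    linarith
  have hPrEq : ∀ (s : Set Ω), MeasurableSet s → ∀ g : ℕ → (Fin K → ℕ) → ℝ,
      (∀ ω, s.indicator (fun _ => (1:ℝ)) ω = g (D ω) (A ω)) →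
      Pr P s = (∑ a ∈ 𝒜, g 0 a * Pr P (evDA D A 0 a))
        + ∑ a ∈ 𝒜, g 1 a * Pr P (evDA D A 1 a) := by
    intro s hs g hg
    calc Pr P s = Exp P (fun ω => s.indicator (fun _ => (1:ℝ)) ω) :=
          (integral_indicator_one hs).symm
      _ = Exp P (fun ω => g (D ω) (A ω)) := congrArg (Exp P) (funext hg)
      _ = _ := EC g
  have hPrD1 : Pr P (evD D 1) = ∑ a ∈ 𝒜, Pr P (evDA D A 1 a) := by
    have hg : ∀ ω, (evD D 1).indicator (fun _ => (1:ℝ)) ω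
        = (fun d (_ : Fin K → ℕ) => if d = 1 then (1:ℝ) else 0) (D ω) (A ω) := by
      intro ω
      by_cases h : D ω = 1 <;> simp [Set.indicator_apply, evD, Set.mem_setOf_eq, h]
    have h := hPrEq (evD D 1) (hD (measurableSet_singleton 1)) (fun d (_ : Fin K → ℕ) => if d = 1 then (1:ℝ) else 0) hg
    simpa using h
  have hPrD0 : Pr P (evD D 0) = ∑ a ∈ 𝒜, Pr P (evDA D A 0 a) := by
    have hg : ∀ ω, (evD D 0).indicator (fun _ => (1:ℝ)) ω
        = (fun d (_ : Fin K → ℕ) => if d = 0 then (1:ℝ) else 0) (D ω) (A ω) := by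
      intro ω
      by_cases h : D ω = 0 <;> simp [Set.indicator_apply, evD, Set.mem_setOf_eq, h]
    have h := hPrEq (evD D 0) (hD (measurableSet_singleton 0)) (fun d (_ : Fin K → ℕ) => if d = 0 then (1:ℝ) else 0) hg
    simpa using h
  have hPrA : ∀ a ∈ 𝒜, Pr P (evA A a) = Pr P (evDA D A 0 a) + Pr P (evDA D A 1 a) := by
    intro a ha
    have hg : ∀ ω, (evA A a).indicator (fun _ => (1:ℝ)) ω
        = (fun (_ : ℕ) (a' : Fin K → ℕ) => if a' = a then (1:ℝ) else 0) (D ω) (A ω) := by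
      intro ω
      by_cases h : A ω = a <;> simp [Set.indicator_apply, evA, Set.mem_setOf_eq, h]
    have h := hPrEq (evA A a) (hA (measurableSet_singleton a)) (fun (_ : ℕ) (a' : Fin K → ℕ) => if a' = a then (1:ℝ) else 0) hg
    rw [h]
    congr 1 <;> simp [Finset.sum_ite_eq', ha, ite_mul]
  have hED : Exp P (fun ω => ((D ω : ℕ) : ℝ)) = ∑ a ∈ 𝒜, Pr P (evDA D A 1 a) := by
    have h := EC (fun d _ => (d : ℝ))
    simpa using h
  have hEDD : Exp P (fun ω => ((D ω : ℕ) : ℝ) * ((D ω : ℕ) : ℝ))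
      = ∑ a ∈ 𝒜, Pr P (evDA D A 1 a) := by
    have h := EC (fun d _ => (d : ℝ) * (d : ℝ))
    simpa using h
  have hEA : ∀ j, Exp P (fun ω => ((A ω j : ℕ) : ℝ))
      = (∑ a ∈ 𝒜, ((a j : ℕ) : ℝ) * Pr P (evDA D A 0 a))
        + ∑ a ∈ 𝒜, ((a j : ℕ) : ℝ) * Pr P (evDA D A 1 a) :=
    fun j => EC (fun _ a => ((a j : ℕ) : ℝ))
  have hEDA : ∀ j, Exp P (fun ω => ((D ω : ℕ) : ℝ) * ((A ω j : ℕ) : ℝ))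
      = ∑ a ∈ 𝒜, ((a j : ℕ) : ℝ) * Pr P (evDA D A 1 a) := by
    intro j
    have h := EC (fun d a => (d : ℝ) * ((a j : ℕ) : ℝ))
    simpa using h
  have hEAA : ∀ i j, Exp P (fun ω => ((A ω i : ℕ) : ℝ) * ((A ω j : ℕ) : ℝ))
      = (∑ a ∈ 𝒜, ((a i : ℕ) : ℝ) * ((a j : ℕ) : ℝ) * Pr P (evDA D A 0 a))
        + ∑ a ∈ 𝒜, ((a i : ℕ) : ℝ) * ((a j : ℕ) : ℝ) * Pr P (evDA D A 1 a) :=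
    fun i j => EC (fun _ a => ((a i : ℕ) : ℝ) * ((a j : ℕ) : ℝ))
  have hvarD : varD P D = (∑ a ∈ 𝒜, Pr P (evDA D A 1 a))
      - (∑ a ∈ 𝒜, Pr P (evDA D A 1 a))^2 := by
    unfold varD Cov
    simp only []
    rw [hEDD, hED]
    ring
  have hcovDA : ∀ j, covDA P D A j = (∑ a ∈ 𝒜, ((a j : ℕ) : ℝ) * Pr P (evDA D A 1 a))
      - (∑ a ∈ 𝒜, Pr P (evDA D A 1 a)) * Exp P (fun ω => ((A ω j : ℕ) : ℝ)) := by
    intro j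
    unfold covDA Cov
    simp only []
    rw [hEDA j, hED]
  have hvarA : ∀ i j, varAmat P A i j
      = ((∑ a ∈ 𝒜, ((a i : ℕ) : ℝ) * ((a j : ℕ) : ℝ) * Pr P (evDA D A 0 a))
          + ∑ a ∈ 𝒜, ((a i : ℕ) : ℝ) * ((a j : ℕ) : ℝ) * Pr P (evDA D A 1 a))
        - Exp P (fun ω => ((A ω i : ℕ) : ℝ)) * Exp P (fun ω => ((A ω j : ℕ) : ℝ)) := by
    intro i j
    simp only [varAmat, Matrix.of_apply, Cov]
    rw [hEAA i j]
  have hMvar : ∀ i, ∑ j, Mlong P D A j *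
      (((∑ a ∈ 𝒜, ((a i : ℕ) : ℝ) * ((a j : ℕ) : ℝ) * Pr P (evDA D A 0 a))
          + ∑ a ∈ 𝒜, ((a i : ℕ) : ℝ) * ((a j : ℕ) : ℝ) * Pr P (evDA D A 1 a))
        - Exp P (fun ω => ((A ω i : ℕ) : ℝ)) * Exp P (fun ω => ((A ω j : ℕ) : ℝ)))
      = (∑ a ∈ 𝒜, ((a i : ℕ) : ℝ) * Pr P (evDA D A 1 a))
        - (∑ a ∈ 𝒜, Pr P (evDA D A 1 a)) * Exp P (fun ω => ((A ω i : ℕ) : ℝ)) := by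
    intro i
    have h := M_varA' hPD i
    rw [hcovDA i] at h
    rw [← h]
    exact Finset.sum_congr rfl fun j _ => by rw [hvarA i j]
  -- orthogonality conditions in summed form
  have hE1 : (∑ a ∈ 𝒜, Exp P ((evDA D A 0 a).indicator (Ypot 0 a)))
      + ∑ a ∈ 𝒜, Exp P ((evDA D A 1 a).indicator (Ypot 1 a))
    = (∑ a ∈ 𝒜, (θ₀ + ∑ j, θ j * ((a j : ℕ) : ℝ)) * Pr P (evDA D A 0 a))
      + ∑ a ∈ 𝒜, (Δlong + θ₀ + ∑ j, θ j * ((a j : ℕ) : ℝ)) * Pr P (evDA D A 1 a) := by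
    have h := orth_expand hD hA hDbin hAsupp hInt (fun _ _ => (1:ℝ))
      (fun (d : ℕ) (a : Fin K → ℕ) => Δlong * (d : ℝ) + θ₀ + ∑ j, θ j * ((a j : ℕ) : ℝ))
      (residLong D A 𝒜 Ypot Δlong θ₀ θ)
      (fun ω => by simp only [residLong]; ring) hO1
    rw [Finset.sum_pair h01, Finset.sum_pair h01] at h
    simp only [one_mul, Nat.cast_zero, Nat.cast_one, mul_zero, zero_add, mul_one] at h
    exact h
  have hE2 : (∑ a ∈ 𝒜, Exp P ((evDA D A 1 a).indicator (Ypot 1 a)))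
    = ∑ a ∈ 𝒜, (Δlong + θ₀ + ∑ j, θ j * ((a j : ℕ) : ℝ)) * Pr P (evDA D A 1 a) := by
    have h := orth_expand hD hA hDbin hAsupp hInt (fun (d : ℕ) (_ : Fin K → ℕ) => ((d : ℕ) : ℝ))
      (fun (d : ℕ) (a : Fin K → ℕ) =>
        (Δlong * (d : ℝ) + θ₀ + ∑ j, θ j * ((a j : ℕ) : ℝ)) * (d : ℝ))
      (fun ω => residLong D A 𝒜 Ypot Δlong θ₀ θ ω * ((D ω : ℕ) : ℝ))
      (fun ω => by simp only [residLong]; ring) hO2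
    rw [Finset.sum_pair h01, Finset.sum_pair h01] at h
    simp only [one_mul, Nat.cast_zero, Nat.cast_one, mul_zero, zero_mul, mul_one, zero_add,
      add_zero, Finset.sum_const_zero] at h
    exact h
  have hE3 : ∀ i, (∑ a ∈ 𝒜, ((a i : ℕ) : ℝ) * Exp P ((evDA D A 0 a).indicator (Ypot 0 a)))
      + ∑ a ∈ 𝒜, ((a i : ℕ) : ℝ) * Exp P ((evDA D A 1 a).indicator (Ypot 1 a))
    = (∑ a ∈ 𝒜, ((a i : ℕ) : ℝ) * ((θ₀ + ∑ j, θ j * ((a j : ℕ) : ℝ)) * Pr P (evDA D A 0 a)))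
      + ∑ a ∈ 𝒜, ((a i : ℕ) : ℝ) *
          ((Δlong + θ₀ + ∑ j, θ j * ((a j : ℕ) : ℝ)) * Pr P (evDA D A 1 a)) := by
    intro i
    have h := orth_expand hD hA hDbin hAsupp hInt (fun (_ : ℕ) (a : Fin K → ℕ) => ((a i : ℕ) : ℝ))
      (fun (d : ℕ) (a : Fin K → ℕ) =>
        ((a i : ℕ) : ℝ) * (Δlong * (d : ℝ) + θ₀ + ∑ j, θ j * ((a j : ℕ) : ℝ)))
      (fun ω => residLong D A 𝒜 Ypot Δlong θ₀ θ ω * ((A ω i : ℕ) : ℝ))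
      (fun ω => by simp only [residLong]; ring) (hO3 i)
    rw [Finset.sum_pair h01, Finset.sum_pair h01] at h
    simp only [one_mul, Nat.cast_zero, Nat.cast_one, mul_zero, zero_mul, mul_one, zero_add,
      add_zero, Finset.sum_const_zero] at h
    calc (∑ a ∈ 𝒜, ((a i : ℕ) : ℝ) * Exp P ((evDA D A 0 a).indicator (Ypot 0 a)))
          + ∑ a ∈ 𝒜, ((a i : ℕ) : ℝ) * Exp P ((evDA D A 1 a).indicator (Ypot 1 a)) = _ := h
      _ = _ := by
          congr 1 <;> exact Finset.sum_congr rfl fun a _ => by ring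
  have hden : denomL P D A ≠ 0 := (denomL_pos hPD).ne'
  have hCEsub : ∀ a ∈ 𝒜, CE P (fun ω => Ypot 1 a ω - Ypot 0 a ω) (evDA D A 1 a)
      = CE P (Ypot 1 a) (evDA D A 1 a) - CE P (Ypot 0 a) (evDA D A 1 a) := by
    intro a ha
    unfold CE
    rw [← sub_div]
    congr 1
    have h1 : Integrable (fun ω => Ypot 1 a ω * (evDA D A 1 a).indicator (fun _ => (1:ℝ)) ω) P := by
      rw [mul_indicator_one]
      exact (hInt 1 hone a ha).indicator (evDA_meas hD hA 1 a)
    have h0 : Integrable (fun ω => Ypot 0 a ω * (evDA D A 1 a).indicator (fun _ => (1:ℝ)) ω) P := by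
      rw [mul_indicator_one]
      exact (hInt 0 hzero a ha).indicator (evDA_meas hD hA 1 a)
    have e : (fun ω => (Ypot 1 a ω - Ypot 0 a ω) * (evDA D A 1 a).indicator (fun _ => (1:ℝ)) ω)
        = fun ω => (Ypot 1 a ω * (evDA D A 1 a).indicator (fun _ => (1:ℝ)) ω) - (Ypot 0 a ω * (evDA D A 1 a).indicator (fun _ => (1:ℝ)) ω) := by
      funext ω; ring
    calc Exp P (fun ω => (Ypot 1 a ω - Ypot 0 a ω) * (evDA D A 1 a).indicator (fun _ => (1:ℝ)) ω)
        = Exp P (fun ω => (Ypot 1 a ω * (evDA D A 1 a).indicator (fun _ => (1:ℝ)) ω) - (Ypot 0 a ω * (evDA D A 1 a).indicator (fun _ => (1:ℝ)) ω)) := congrArg (Exp P) e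
      _ = _ := integral_sub h1 h0
  have hS13 : (∑ a ∈ 𝒜, wdceL P D A a * CE P (fun ω => Ypot 1 a ω - Ypot 0 a ω) (evDA D A 1 a))
      + ∑ a ∈ 𝒜, wdceL P D A a * (CE P (Ypot 0 a) (evDA D A 1 a) - CE P (Ypot 0 a) (evDA D A 0 a))
    = ∑ a ∈ 𝒜, wdceL P D A a * (CE P (Ypot 1 a) (evDA D A 1 a) - CE P (Ypot 0 a) (evDA D A 0 a)) := by
    rw [← Finset.sum_add_distrib]
    refine Finset.sum_congr rfl fun a ha => ?_
    rw [hCEsub a ha]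
    ring
  rw [add_right_comm, hS13]
  refine (mul_right_cancel₀ hden ?_).symm
  rw [add_mul, Finset.sum_mul, Finset.sum_mul]
  have hSzero : ∑ a ∈ 𝒜, (Pr P (evDA D A 0 a) + Pr P (evDA D A 1 a)) * (∑ j, Mlong P D A j * (((a j : ℕ) : ℝ) - Exp P (fun ω => ((A ω j : ℕ) : ℝ)))) = 0 := by
    have step1 : ∑ a ∈ 𝒜, (Pr P (evDA D A 0 a) + Pr P (evDA D A 1 a)) * (∑ j, Mlong P D A j * (((a j : ℕ) : ℝ) - Exp P (fun ω => ((A ω j : ℕ) : ℝ))))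
        = ∑ a ∈ 𝒜, (∑ j, Mlong P D A j * (((a j : ℕ) : ℝ) - Exp P (fun ω => ((A ω j : ℕ) : ℝ))))
            * (Pr P (evDA D A 0 a) + Pr P (evDA D A 1 a)) :=
      Finset.sum_congr rfl fun a _ => mul_comm _ _
    rw [step1, sum_weighted_swap 𝒜
      (fun a j => ((a j : ℕ) : ℝ) - Exp P (fun ω => ((A ω j : ℕ) : ℝ)))
      (Mlong P D A) (fun a => Pr P (evDA D A 0 a) + Pr P (evDA D A 1 a))]
    refine Finset.sum_eq_zero fun j _ => ?_
    have inner : ∑ a ∈ 𝒜, (((a j : ℕ) : ℝ) - Exp P (fun ω => ((A ω j : ℕ) : ℝ)))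
        * (Pr P (evDA D A 0 a) + Pr P (evDA D A 1 a)) = 0 := by
      have e : ∀ a, (((a j : ℕ) : ℝ) - Exp P (fun ω => ((A ω j : ℕ) : ℝ))) * (Pr P (evDA D A 0 a) + Pr P (evDA D A 1 a))
          = (((a j : ℕ) : ℝ) * Pr P (evDA D A 0 a) + ((a j : ℕ) : ℝ) * Pr P (evDA D A 1 a))
            - (Exp P (fun ω => ((A ω j : ℕ) : ℝ)) * Pr P (evDA D A 0 a)
              + Exp P (fun ω => ((A ω j : ℕ) : ℝ)) * Pr P (evDA D A 1 a)) := by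
        intro a; ring
      simp_rw [e]
      rw [Finset.sum_sub_distrib, Finset.sum_add_distrib, Finset.sum_add_distrib,
        ← Finset.mul_sum, ← Finset.mul_sum, ← mul_add, htot, mul_one, ← hEA j, sub_self]
    rw [inner, mul_zero]
  have hwdce : ∀ a ∈ 𝒜, wdceL P D A a * denomL P D A
      = Pr P (evDA D A 1 a) / (∑ b ∈ 𝒜, Pr P (evDA D A 1 b)) * (((∑ b ∈ 𝒜, Pr P (evDA D A 1 b)) - (∑ b ∈ 𝒜, Pr P (evDA D A 1 b)) ^ 2) - (∑ b ∈ 𝒜, Pr P (evDA D A 1 b)) * (∑ j, Mlong P D A j * (((a j : ℕ) : ℝ) - Exp P (fun ω => ((A ω j : ℕ) : ℝ))))) := by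
    intro a ha
    unfold wdceL piP
    rw [div_mul_cancel₀ _ hden, hPrD1, hvarD]
  have hwind : ∀ a ∈ 𝒜, windL P D A a * denomL P D A
      = ((∑ b ∈ 𝒜, Pr P (evDA D A 1 b)) - (∑ b ∈ 𝒜, Pr P (evDA D A 1 b)) ^ 2) * (Pr P (evDA D A 1 a) / (∑ b ∈ 𝒜, Pr P (evDA D A 1 b)) - Pr P (evDA D A 0 a) / (1 - (∑ b ∈ 𝒜, Pr P (evDA D A 1 b)))) - (Pr P (evDA D A 0 a) + Pr P (evDA D A 1 a)) * (∑ j, Mlong P D A j * (((a j : ℕ) : ℝ) - Exp P (fun ω => ((A ω j : ℕ) : ℝ)))) := by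
    intro a ha
    unfold windL piP
    rw [div_mul_cancel₀ _ hden, hPrD1, hPrD0, hvarD, hPrA a ha, hq0sum]
  calc (∑ a ∈ 𝒜, wdceL P D A a * (CE P (Ypot 1 a) (evDA D A 1 a) - CE P (Ypot 0 a) (evDA D A 0 a)) * denomL P D A)
        + ∑ a ∈ 𝒜, windL P D A a * (CE P (Ypot 0 a) (evDA D A 0 a) - CE P (Ypot 0 0) (evDA D A 0 0)) * denomL P D A
      = (∑ a ∈ 𝒜, (Pr P (evDA D A 1 a) / (∑ b ∈ 𝒜, Pr P (evDA D A 1 b)) * (((∑ b ∈ 𝒜, Pr P (evDA D A 1 b)) - (∑ b ∈ 𝒜, Pr P (evDA D A 1 b)) ^ 2) - (∑ b ∈ 𝒜, Pr P (evDA D A 1 b)) * (∑ j, Mlong P D A j * (((a j : ℕ) : ℝ) - Exp P (fun ω => ((A ω j : ℕ) : ℝ)))))) * (CE P (Ypot 1 a) (evDA D A 1 a) - CE P (Ypot 0 a) (evDA D A 0 a)))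
        + ∑ a ∈ 𝒜, (((∑ b ∈ 𝒜, Pr P (evDA D A 1 b)) - (∑ b ∈ 𝒜, Pr P (evDA D A 1 b)) ^ 2) * (Pr P (evDA D A 1 a) / (∑ b ∈ 𝒜, Pr P (evDA D A 1 b)) - Pr P (evDA D A 0 a) / (1 - (∑ b ∈ 𝒜, Pr P (evDA D A 1 b))))
            - (Pr P (evDA D A 0 a) + Pr P (evDA D A 1 a)) * (∑ j, Mlong P D A j * (((a j : ℕ) : ℝ) - Exp P (fun ω => ((A ω j : ℕ) : ℝ))))) * (CE P (Ypot 0 a) (evDA D A 0 a) - CE P (Ypot 0 0) (evDA D A 0 0)) := by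
        congr 1 <;> refine Finset.sum_congr rfl fun a ha => ?_
        · rw [show wdceL P D A a * (CE P (Ypot 1 a) (evDA D A 1 a) - CE P (Ypot 0 a) (evDA D A 0 a)) * denomL P D A
              = (wdceL P D A a * denomL P D A) * (CE P (Ypot 1 a) (evDA D A 1 a) - CE P (Ypot 0 a) (evDA D A 0 a)) from by ring, hwdce a ha]
        · rw [show windL P D A a * (CE P (Ypot 0 a) (evDA D A 0 a) - CE P (Ypot 0 0) (evDA D A 0 0)) * denomL P D A
              = (windL P D A a * denomL P D A) * (CE P (Ypot 0 a) (evDA D A 0 a) - CE P (Ypot 0 0) (evDA D A 0 0)) from by ring, hwind a ha]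
    _ = ∑ a ∈ 𝒜, (Pr P (evDA D A 1 a) * (1 - (∑ b ∈ 𝒜, Pr P (evDA D A 1 b)) - (∑ j, Mlong P D A j * (((a j : ℕ) : ℝ) - Exp P (fun ω => ((A ω j : ℕ) : ℝ))))) * CE P (Ypot 1 a) (evDA D A 1 a) + Pr P (evDA D A 0 a) * (-(∑ b ∈ 𝒜, Pr P (evDA D A 1 b)) - (∑ j, Mlong P D A j * (((a j : ℕ) : ℝ) - Exp P (fun ω => ((A ω j : ℕ) : ℝ))))) * CE P (Ypot 0 a) (evDA D A 0 a)) :=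
        final_algebra 𝒜 0 (fun a => Pr P (evDA D A 0 a)) (fun a => Pr P (evDA D A 1 a))
          (fun a => CE P (Ypot 0 a) (evDA D A 0 a)) (fun a => CE P (Ypot 1 a) (evDA D A 1 a))
          (fun a => ∑ j, Mlong P D A j * (((a j : ℕ) : ℝ) - Exp P (fun ω => ((A ω j : ℕ) : ℝ))))
          (∑ b ∈ 𝒜, Pr P (evDA D A 1 b)) hppos hplt1 rfl hq0sum hSzero
    _ = (∑ a ∈ 𝒜, Exp P ((evDA D A 1 a).indicator (Ypot 1 a)) * (1 - (∑ b ∈ 𝒜, Pr P (evDA D A 1 b)) - (∑ j, Mlong P D A j * (((a j : ℕ) : ℝ) - Exp P (fun ω => ((A ω j : ℕ) : ℝ))))))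
        + ∑ a ∈ 𝒜, Exp P ((evDA D A 0 a).indicator (Ypot 0 a)) * (-(∑ b ∈ 𝒜, Pr P (evDA D A 1 b)) - (∑ j, Mlong P D A j * (((a j : ℕ) : ℝ) - Exp P (fun ω => ((A ω j : ℕ) : ℝ))))) := by
        rw [Finset.sum_add_distrib]
        congr 1 <;> refine Finset.sum_congr rfl fun a ha => ?_
        · rw [show CE P (Ypot 1 a) (evDA D A 1 a) = Exp P ((evDA D A 1 a).indicator (Ypot 1 a)) / Pr P (evDA D A 1 a) from by
            unfold CE Pr
            rw [congrArg (Exp P) (mul_indicator_one (evDA D A 1 a) (Ypot 1 a))]]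
          have hne := (hq1pos a ha).ne'
          field_simp
        · rw [show CE P (Ypot 0 a) (evDA D A 0 a) = Exp P ((evDA D A 0 a).indicator (Ypot 0 a)) / Pr P (evDA D A 0 a) from by
            unfold CE Pr
            rw [congrArg (Exp P) (mul_indicator_one (evDA D A 0 a) (Ypot 0 a))]]
          have hne := (hq0pos a ha).ne'
          field_simp
    _ = Δlong * (((∑ b ∈ 𝒜, Pr P (evDA D A 1 b)) - (∑ b ∈ 𝒜, Pr P (evDA D A 1 b)) ^ 2) - ∑ j, Mlong P D A j *
          ((∑ a ∈ 𝒜, ((a j : ℕ) : ℝ) * Pr P (evDA D A 1 a))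
            - (∑ b ∈ 𝒜, Pr P (evDA D A 1 b)) * Exp P (fun ω => ((A ω j : ℕ) : ℝ)))) :=
        (NE_algebra 𝒜 (fun a j => ((a j : ℕ) : ℝ))
          (fun a => Pr P (evDA D A 0 a)) (fun a => Pr P (evDA D A 1 a))
          (fun a => Exp P ((evDA D A 0 a).indicator (Ypot 0 a)))
          (fun a => Exp P ((evDA D A 1 a).indicator (Ypot 1 a)))
          (fun j => Exp P (fun ω => ((A ω j : ℕ) : ℝ))) (Mlong P D A) θ Δlong θ₀ (∑ b ∈ 𝒜, Pr P (evDA D A 1 b))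
          rfl htot (fun j => (hEA j).symm) hMvar hE1 hE2 hE3).symm
    _ = Δlong * denomL P D A := by
        congr 1
        unfold denomL
        rw [hvarD]
        congr 1
        exact Finset.sum_congr rfl fun j _ => by rw [hcovDA j]
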